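/- Let n ≥ 1 and let v, w ∈ ℂⁿ with ‖v‖ = 1 (w arbitrary, possibly subnormalized). Then the trace norm of the Hermitian matrix v v† − w w† satisfies ‖v v† − w w†‖₁ = 2·√( (1/4)·(1 + ‖w‖²)² − |⟨v,w⟩|² ). Equivalently, the trace distance between the (possibly unnormalized) pure states v and w equals √( (1/4)(1+‖w‖²)² − |⟨v,w⟩|² ). -/

import Mathlib

/-- The outer product `v v†` of a vector with itself: the matrix with
`(i, j)` entry `vᵢ · conj (v_j)`. -/
noncomputable def outerProd {ι : Type*} (v : ι → ℂ) : Matrix ι ι ℂ :=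
  Matrix.of fun i j => v i * (starRingEnd ℂ) (v j)

/-- The trace norm of a Hermitian matrix: the sum of the absolute values of its
eigenvalues, counted with multiplicity. -/
noncomputable def traceNormHerm {ι : Type*} [Fintype ι] [DecidableEq ι]
    {A : Matrix ι ι ℂ} (hA : A.IsHermitian) : ℝ :=
  ∑ i, |hA.eigenvalues i|

namespace TraceNormAux

noncomputable def op {n : ℕ} (x y : Fin n → ℂ) : Matrix (Fin n) (Fin n) ℂ :=
  Matrix.of fun i j => x i * (starRingEnd ℂ) (y j)

lemma op_mul_op {n : ℕ} (x y z t : Fin n → ℂ) :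
    op x y * op z t = (∑ k, (starRingEnd ℂ) (y k) * z k) • op x t := by
  ext i j
  simp only [op, Matrix.mul_apply, Matrix.smul_apply, Matrix.of_apply, smul_eq_mul,
    Finset.sum_mul]
  apply Finset.sum_congr rfl
  intros; ring

lemma trace_op {n : ℕ} (x y : Fin n → ℂ) :
    Matrix.trace (op x y) = ∑ i, x i * (starRingEnd ℂ) (y i) := by
  simp [Matrix.trace, Matrix.diag, op]

/-- The cubic matrix identity `A³ = (1-m)A² - (c c̄ - m)A` for `A = v v† - w w†`. -/
lemma matrix_cubic {n : ℕ} (v w : Fin n → ℂ) (c m' : ℂ)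
    (hvv : (∑ k, (starRingEnd ℂ) (v k) * v k) = 1)
    (hvw : (∑ k, (starRingEnd ℂ) (v k) * w k) = c)
    (hwv : (∑ k, (starRingEnd ℂ) (w k) * v k) = (starRingEnd ℂ) c)
    (hww : (∑ k, (starRingEnd ℂ) (w k) * w k) = m') :
    (op v v - op w w) * (op v v - op w w) * (op v v - op w w) =
      (1 - m') • ((op v v - op w w) * (op v v - op w w))
        - (c * (starRingEnd ℂ) c - m') • (op v v - op w w) := by
  set A := op v v - op w w with hA
  have h11 := op_mul_op v v v v
  have h14 := op_mul_op v v w w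
  have h41 := op_mul_op w w v v
  have h44 := op_mul_op w w w w
  have h21 := op_mul_op v w v v
  have h24 := op_mul_op v w w w
  have h31 := op_mul_op w v v v
  have h34 := op_mul_op w v w w
  rw [hvv] at h11 h31
  rw [hvw] at h14 h34
  rw [hwv] at h21 h41
  rw [hww] at h24 h44
  have hA2 : A * A = op v v - c • op v w - (starRingEnd ℂ) c • op w v + m' • op w w := by
    rw [hA]
    simp only [sub_mul, add_mul, mul_sub, smul_mul_assoc, h11, h14, h41, h44]
    module
  have hA3 : A * A * A = (1 - c * (starRingEnd ℂ) c) • op v v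
      - (c * (1 - m')) • op v w - ((starRingEnd ℂ) c * (1 - m')) • op w v
      + (c * (starRingEnd ℂ) c - m' * m') • op w w := by
    rw [hA2, hA]
    simp only [sub_mul, add_mul, mul_sub, smul_mul_assoc, h11, h14, h21, h24, h31, h34, h41, h44]
    simp only [smul_smul]
    module
  rw [hA3, hA2, hA]
  module

open Matrix in
/-- From the matrix cubic identity, each eigenvalue satisfies the scalar cubic. -/
lemma eigen_cubic {n : ℕ} {A : Matrix (Fin n) (Fin n) ℂ} (hA : A.IsHermitian)
    (s' p' : ℂ) (MID : A * A * A = s' • (A * A) - p' • A) (i : Fin n) :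
    ((hA.eigenvalues i : ℂ))^3 = s' * (hA.eigenvalues i)^2 - p' * (hA.eigenvalues i) := by
  set μ : ℝ := hA.eigenvalues i with hμ
  set u : Fin n → ℂ := ⇑(hA.eigenvectorBasis i) with hu
  have hu0 : u ≠ 0 := by
    have h := hA.eigenvectorBasis.orthonormal.ne_zero i
    intro hh
    apply h
    ext j
    exact congrFun hh j
  have h1 : A *ᵥ u = (μ : ℂ) • u := by
    rw [hu, hA.mulVec_eigenvectorBasis i]
    ext j
    simp [hμ, Complex.real_smul]
  have h3 : (A * A * A) *ᵥ u = ((μ:ℂ)^3) • u := by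
    rw [← Matrix.mulVec_mulVec, ← Matrix.mulVec_mulVec]
    simp only [h1, Matrix.mulVec_smul, smul_smul]
    ring_nf
  have h2 : (s' • (A * A) - p' • A) *ᵥ u = (s' * (μ:ℂ)^2 - p' * (μ:ℂ)) • u := by
    rw [Matrix.sub_mulVec, Matrix.smul_mulVec, Matrix.smul_mulVec,
      ← Matrix.mulVec_mulVec]
    simp only [h1, Matrix.mulVec_smul, smul_smul, sub_smul]
    ring_nf
  have h5 := MID ▸ h3
  rw [h2] at h5
  have h4 : ((μ:ℂ)^3 - (s' * (μ:ℂ)^2 - p' * (μ:ℂ))) • u = 0 := by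
    rw [sub_smul, h5, sub_self]
  rcases smul_eq_zero.mp h4 with h | h
  · have := sub_eq_zero.mp h
    rw [this]
  · exact absurd h hu0

lemma trace_eq_sum_eigen {n : ℕ} {A : Matrix (Fin n) (Fin n) ℂ} (hA : A.IsHermitian) :
    Matrix.trace A = ∑ i, ((hA.eigenvalues i : ℂ)) := by
  nth_rw 1 [hA.spectral_theorem]
  rw [Unitary.conjStarAlgAut_apply, Matrix.trace_mul_cycle]
  rw [show star (hA.eigenvectorUnitary : Matrix (Fin n) (Fin n) ℂ) *
      (hA.eigenvectorUnitary : Matrix (Fin n) (Fin n) ℂ) = 1 from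
    Matrix.mem_unitaryGroup_iff'.mp hA.eigenvectorUnitary.2, one_mul, Matrix.trace_diagonal]
  rfl

lemma trace_sq_eq_sum_eigen_sq {n : ℕ} {A : Matrix (Fin n) (Fin n) ℂ} (hA : A.IsHermitian) :
    Matrix.trace (A * A) = ∑ i, ((hA.eigenvalues i : ℂ))^2 := by
  have key : ∀ (U D : Matrix (Fin n) (Fin n) ℂ), star U * U = 1 → A = U * D * star U →
      Matrix.trace (A * A) = Matrix.trace (D * D) := by
    intro U D h hAeq
    have h2 : (U * D * star U) * (U * D * star U) = U * (D * (star U * U) * D) * star U := by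
      noncomm_ring
    rw [hAeq, h2, h, mul_one, Matrix.trace_mul_cycle, ← mul_assoc, h, one_mul]
  rw [key _ _ (Matrix.mem_unitaryGroup_iff'.mp hA.eigenvectorUnitary.2) hA.spectral_theorem,
    Matrix.diagonal_mul_diagonal, Matrix.trace_diagonal]
  apply Finset.sum_congr rfl
  intros; simp [sq]

/-- Key scalar lemma: a real root of `x³ = s x² - p x` with `p ≤ 0` satisfies
`|μ| √(s² - 4p) = 2μ² - sμ`. -/
lemma abs_root (s p μ : ℝ) (hp : p ≤ 0) (h : μ^3 = s*μ^2 - p*μ) :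
    |μ| * Real.sqrt (s^2 - 4*p) = 2*μ^2 - s*μ := by
  rcases eq_or_ne μ 0 with h0 | h0
  · simp [h0]
  · have hfac : μ * (μ^2 - s*μ + p) = 0 := by linear_combination h
    have hq : μ^2 - s*μ + p = 0 := by
      rcases mul_eq_zero.mp hfac with h' | h'
      · exact absurd h' h0
      · exact h'
    have h2 : s^2 - 4*p = (2*μ - s)^2 := by linear_combination (-4) * hq
    have hnn : 0 ≤ μ * (2*μ - s) := by nlinarith [hq, hp]
    rw [h2, Real.sqrt_sq_eq_abs, ← abs_mul, abs_of_nonneg hnn]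
    ring

end TraceNormAux

open TraceNormAux in
theorem trace_norm_pure_states_eq {n : ℕ} (hn : 1 ≤ n)
    (v w : EuclideanSpace ℂ (Fin n)) (hv : ‖v‖ = 1)
    (hH : (outerProd (fun i => v i) - outerProd (fun i => w i)).IsHermitian) :
    traceNormHerm hH =
      2 * Real.sqrt ((1 / 4) * (1 + ‖w‖ ^ 2) ^ 2
          - ‖inner (𝕜 := ℂ) v w‖ ^ 2) := by
  classical
  set c : ℂ := inner (𝕜 := ℂ) v w with hc
  set m : ℝ := ‖w‖ ^ 2 with hm
  set a : ℝ := ‖c‖ with ha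
  set s : ℝ := 1 - m with hs
  set p : ℝ := a ^ 2 - m with hp
  have hm0 : 0 ≤ m := by positivity
  -- basic inner product computations
  have hvv : (∑ k, (starRingEnd ℂ) (v k) * v k) = 1 := by
    have := inner_self_eq_norm_sq_to_K (𝕜 := ℂ) v
    rw [hv, PiLp.inner_apply] at this
    simp only [RCLike.inner_apply'] at this
    rw [this]; simp
  have hww : (∑ k, (starRingEnd ℂ) (w k) * w k) = ((m : ℝ) : ℂ) := by
    have := inner_self_eq_norm_sq_to_K (𝕜 := ℂ) w
    rw [hm]
    rw [PiLp.inner_apply] at this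
    simp only [RCLike.inner_apply'] at this
    exact_mod_cast this
  have hvw : (∑ k, (starRingEnd ℂ) (v k) * w k) = c := by
    rw [hc, PiLp.inner_apply]
    simp only [RCLike.inner_apply']
  have hwv : (∑ k, (starRingEnd ℂ) (w k) * v k) = (starRingEnd ℂ) c := by
    rw [hc, ← inner_conj_symm, PiLp.inner_apply]
    simp only [RCLike.inner_apply', Complex.conj_conj]
  have hccbar : c * (starRingEnd ℂ) c = ((a ^ 2 : ℝ) : ℂ) := by
    simp only [Complex.mul_conj, ha, ← Complex.sq_norm]
  -- `p ≤ 0` by Cauchy–Schwarz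
  have hp0 : p ≤ 0 := by
    have h1 : a ≤ ‖w‖ := by
      rw [ha, hc]
      calc ‖(inner (𝕜 := ℂ) v w : ℂ)‖ ≤ ‖v‖ * ‖w‖ := norm_inner_le_norm v w
        _ = ‖w‖ := by rw [hv, one_mul]
    have h2 : a ^ 2 ≤ m := by
      rw [hm]
      have ha0 : 0 ≤ a := by rw [ha]; exact norm_nonneg c
      nlinarith
    rw [hp]; linarith
  -- the matrix and its identity
  set A : Matrix (Fin n) (Fin n) ℂ :=
    outerProd (fun i => v i) - outerProd (fun i => w i) with hAdef
  have hAeq : A = op (fun i => v i) (fun i => v i) - op (fun i => w i) (fun i => w i) := rfl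
  have MID : A * A * A = ((s : ℝ) : ℂ) • (A * A) - ((p : ℝ) : ℂ) • A := by
    rw [hAeq]
    have := matrix_cubic (fun i => v i) (fun i => w i) c ((m : ℝ) : ℂ) hvv hvw hwv hww
    rw [this, hccbar]
    have e1 : (1 - ((m : ℝ) : ℂ)) = ((s : ℝ) : ℂ) := by rw [hs]; push_cast; ring
    have e2 : (((a ^ 2 : ℝ) : ℂ) - ((m : ℝ) : ℂ)) = ((p : ℝ) : ℂ) := by
      rw [hp]; push_cast; ring
    rw [e1, e2]
  -- eigenvalue cubic over ℝ
  set μ : Fin n → ℝ := hH.eigenvalues with hμdef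
  have cubic : ∀ i, (μ i) ^ 3 = s * (μ i) ^ 2 - p * (μ i) := by
    intro i
    have := eigen_cubic hH ((s : ℝ) : ℂ) ((p : ℝ) : ℂ) MID i
    exact_mod_cast this
  -- trace computations
  have htr1 : Matrix.trace A = ((s : ℝ) : ℂ) := by
    rw [hAeq, Matrix.trace_sub, trace_op, trace_op]
    have e1 : (∑ i, v i * (starRingEnd ℂ) (v i)) = 1 := by
      rw [← hvv]; exact Finset.sum_congr rfl fun i _ => mul_comm _ _
    have e2 : (∑ i, w i * (starRingEnd ℂ) (w i)) = ((m : ℝ) : ℂ) := by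
      rw [← hww]; exact Finset.sum_congr rfl fun i _ => mul_comm _ _
    rw [e1, e2, hs]; push_cast; ring
  have htr2 : Matrix.trace (A * A) = ((1 + m ^ 2 - 2 * a ^ 2 : ℝ) : ℂ) := by
    have h11 := op_mul_op (fun i => v i) (fun i => v i) (fun i => v i) (fun i => v i)
    have h14 := op_mul_op (fun i => v i) (fun i => v i) (fun i => w i) (fun i => w i)
    have h41 := op_mul_op (fun i => w i) (fun i => w i) (fun i => v i) (fun i => v i)
    have h44 := op_mul_op (fun i => w i) (fun i => w i) (fun i => w i) (fun i => w i)
    rw [hvv] at h11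
    rw [hvw] at h14
    rw [hwv] at h41
    rw [hww] at h44
    have hA2 : A * A = op (fun i => v i) (fun i => v i) - c • op (fun i => v i) (fun i => w i)
        - (starRingEnd ℂ) c • op (fun i => w i) (fun i => v i)
        + ((m : ℝ) : ℂ) • op (fun i => w i) (fun i => w i) := by
      rw [hAeq]
      simp only [sub_mul, mul_sub, smul_mul_assoc, h11, h14, h41, h44]
      module
    have gen : ∀ x y : Fin n → ℂ, Matrix.trace (op x y)
        = (starRingEnd ℂ) (∑ k, (starRingEnd ℂ) (x k) * y k) := by
      intro x y
      rw [trace_op, map_sum]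
      exact Finset.sum_congr rfl fun i _ => by simp [mul_comm]
    have tvw : Matrix.trace (op (fun i => v i) (fun i => w i)) = (starRingEnd ℂ) c := by
      rw [gen, hvw]
    have twv : Matrix.trace (op (fun i => w i) (fun i => v i)) = c := by
      rw [gen, hwv, RingHomInvPair.comp_apply_eq]
    have tvv : Matrix.trace (op (fun i => v i) (fun i => v i)) = 1 := by
      rw [trace_op, ← hvv]
      exact Finset.sum_congr rfl fun i _ => mul_comm _ _
    have tww : Matrix.trace (op (fun i => w i) (fun i => w i)) = ((m : ℝ) : ℂ) := by
      rw [trace_op, ← hww]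
      exact Finset.sum_congr rfl fun i _ => mul_comm _ _
    rw [hA2, Matrix.trace_add, Matrix.trace_sub, Matrix.trace_sub, Matrix.trace_smul,
      Matrix.trace_smul, Matrix.trace_smul, tvv, tvw, twv, tww]
    have : (starRingEnd ℂ) c * c = ((a ^ 2 : ℝ) : ℂ) := by rw [mul_comm]; exact hccbar
    rw [smul_eq_mul, smul_eq_mul, smul_eq_mul, hccbar, this]
    push_cast; ring
  -- eigenvalue sums
  have S1 : ∑ i, μ i = s := by
    have h1 := trace_eq_sum_eigen hH
    rw [htr1] at h1
    rw [← hμdef] at h1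
    have h2 : (((∑ i, μ i : ℝ)) : ℂ) = ((s : ℝ) : ℂ) := by
      rw [h1]; push_cast; rfl
    exact_mod_cast h2
  have S2 : ∑ i, (μ i) ^ 2 = 1 + m ^ 2 - 2 * a ^ 2 := by
    have h1 := trace_sq_eq_sum_eigen_sq hH
    rw [htr2] at h1
    rw [← hμdef] at h1
    have h2 : (((∑ i, (μ i) ^ 2 : ℝ)) : ℂ) = ((1 + m ^ 2 - 2 * a ^ 2 : ℝ) : ℂ) := by
      rw [h1]; push_cast; rfl
    exact_mod_cast h2
  -- the discriminant
  set Dd : ℝ := s ^ 2 - 4 * p with hDd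
  have hDd0 : 0 ≤ Dd := by rw [hDd]; nlinarith [hp0]
  have Hsum : (∑ i, |μ i|) * Real.sqrt Dd = Dd := by
    rw [Finset.sum_mul]
    have : ∀ i ∈ Finset.univ, |μ i| * Real.sqrt Dd = 2 * (μ i) ^ 2 - s * (μ i) := by
      intro i _
      rw [hDd]
      exact abs_root s p (μ i) hp0 (cubic i)
    rw [Finset.sum_congr rfl this, Finset.sum_sub_distrib, ← Finset.mul_sum, ← Finset.mul_sum,
      S1, S2, hDd, hs, hp]
    ring
  have hDval : (1 / 4 : ℝ) * (1 + m) ^ 2 - a ^ 2 = Dd / 4 := by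
    rw [hDd, hs, hp]; ring
  have hgoal : traceNormHerm hH = ∑ i, |μ i| := rfl
  rw [hgoal, hDval]
  rcases eq_or_lt_of_le hDd0 with hD0 | hDpos
  · -- Dd = 0: all eigenvalues vanish
    have hDs : s ^ 2 - 4 * p = 0 := by rw [← hDd, ← hD0]
    have hsz : s = 0 := by
      have h2 : s ^ 2 = 0 := le_antisymm (by nlinarith) (sq_nonneg s)
      exact pow_eq_zero_iff (by norm_num) |>.mp h2
    have hpz : p = 0 := by nlinarith
    have hzero : ∀ i, μ i = 0 := by
      intro i
      have h3 := cubic i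
      rw [hsz, hpz] at h3
      have h4 : (μ i) ^ 3 = 0 := by linarith
      exact pow_eq_zero_iff (by norm_num) |>.mp h4
    rw [← hD0]
    simp [hzero]
  · -- Dd > 0
    have hsq : Real.sqrt Dd ≠ 0 := by positivity
    have hpos : 0 < Real.sqrt Dd := Real.sqrt_pos.mpr hDpos
    have h1 : ∑ i, |μ i| = Real.sqrt Dd := by
      apply mul_right_cancel₀ (ne_of_gt hpos)
      rw [Hsum, Real.mul_self_sqrt hDd0]
    have h2 : Real.sqrt (Dd / 4) = Real.sqrt Dd / 2 := by
      rw [show Dd / 4 = (Real.sqrt Dd / 2) ^ 2 by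
        rw [div_pow, Real.sq_sqrt hDd0]; norm_num]
      exact Real.sqrt_sq (by positivity)
    rw [h1, h2]
    ring
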